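/- arXiv:2109.10846 — 2 statements merged into one kernel-verified Lean document; each statement's English description precedes it below -/
import Mathlib

section
/- Let T be a left-invertible operator with the wandering subspace property, T' = T(T*T)^{-1} its Cauchy dual, M_n the closed span of ⋃_{k=0}^n T^k(ker T*), and S_n(w) = Σ_{k=0}^n w̄^k T'^k. Then w ∈ ℂ is a bounded point evaluation for T if and only if sup_n ‖P_{M_n} S_n(w)|_{ker T*}‖ < ∞; moreover, in that case ‖E_w*‖ = sup_n ‖P_{M_n} S_n(w)|_{ker T*}‖. -/
open ContinuousLinearMap Submodule Filter

noncomputable section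

variable {H : Type*} [NormedAddCommGroup H] [InnerProductSpace ℂ H] [CompleteSpace H]

/-- The wandering subspace `ker T*`. -/
def kerAdj (T : H →L[ℂ] H) : Submodule ℂ H := LinearMap.ker (ContinuousLinearMap.adjoint T).toLinearMap

/-- `T` has the wandering subspace property: the closed linear span of
`⋃ₙ Tⁿ(ker T*)` is all of `H`. -/
def WSP (T : H →L[ℂ] H) : Prop :=
  (⨆ n : ℕ, (kerAdj T).map (T ^ n).toLinearMap).topologicalClosure = ⊤

/-- `w` is a bounded point evaluation for `T`: `‖p(w)‖ ≤ c ‖p(T)‖` for all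
`ker T*`-valued polynomials `p`, where `p(T) = Σ Tⁿ xₙ` for `p(z) = Σ xₙ zⁿ`. -/
def IsBPE (T : H →L[ℂ] H) (w : ℂ) : Prop :=
  ∃ c > (0 : ℝ), ∀ (k : ℕ) (x : ℕ → H), (∀ n, x n ∈ kerAdj T) →
    ‖∑ n ∈ Finset.range (k + 1), w ^ n • x n‖ ≤
      c * ‖∑ n ∈ Finset.range (k + 1), (T ^ n) (x n)‖

/-- `E` is the (continuous extension of the) evaluation operator at `w`:
it takes values in `ker T*` and sends `p(T)` to `p(w)`. -/
def IsEval (T : H →L[ℂ] H) (w : ℂ) (E : H →L[ℂ] H) : Prop :=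
  (∀ y, E y ∈ kerAdj T) ∧
    ∀ (k : ℕ) (x : ℕ → H), (∀ n, x n ∈ kerAdj T) →
      E (∑ n ∈ Finset.range (k + 1), (T ^ n) (x n)) =
        ∑ n ∈ Finset.range (k + 1), w ^ n • x n

open scoped InnerProductSpace

instance kerAdj.completeSpace (T : H →L[ℂ] H) : CompleteSpace (kerAdj T) :=
  (ContinuousLinearMap.isClosed_ker (ContinuousLinearMap.adjoint T)).completeSpace_coe

namespace Stmt11Aux

variable {T T' Q : H →L[ℂ] H} {w : ℂ}

lemma pow_adj_T (hT'T : ∀ z, ContinuousLinearMap.adjoint T' (T z) = z) :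
    ∀ (j m : ℕ) (z : H), j ≤ m →
      ((ContinuousLinearMap.adjoint T') ^ j) ((T ^ m) z) = (T ^ (m - j)) z := by
  intro j
  induction j with
  | zero => intro m z _; simp
  | succ j ih =>
    intro m z hjm
    obtain ⟨m', rfl⟩ : ∃ m', m = m' + 1 := ⟨m - 1, by omega⟩
    have h1 : (T ^ (m' + 1)) z = T ((T ^ m') z) := by
      rw [pow_succ', ContinuousLinearMap.mul_apply]
    rw [h1, pow_succ, ContinuousLinearMap.mul_apply, hT'T, Nat.succ_sub_succ]
    exact ih m' z (by omega)

lemma pow_adj_K (hT'K : ∀ x ∈ kerAdj T, ContinuousLinearMap.adjoint T' x = 0) :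
    ∀ (j : ℕ), 1 ≤ j → ∀ x ∈ kerAdj T, ((ContinuousLinearMap.adjoint T') ^ j) x = 0 := by
  intro j hj x hx
  obtain ⟨j', rfl⟩ : ∃ j', j = j' + 1 := ⟨j - 1, by omega⟩
  rw [pow_succ, ContinuousLinearMap.mul_apply, hT'K x hx, map_zero]

lemma Q_pow_T (hQT : ∀ z, Q (T z) = 0) :
    ∀ (m : ℕ), 1 ≤ m → ∀ z : H, Q ((T ^ m) z) = 0 := by
  intro m hm z
  obtain ⟨m', rfl⟩ : ∃ m', m = m' + 1 := ⟨m - 1, by omega⟩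
  rw [pow_succ', ContinuousLinearMap.mul_apply, hQT]

lemma Gval (hT'T : ∀ z, ContinuousLinearMap.adjoint T' (T z) = z)
    (hT'K : ∀ x ∈ kerAdj T, ContinuousLinearMap.adjoint T' x = 0)
    (hQT : ∀ z, Q (T z) = 0) (hQK : ∀ x ∈ kerAdj T, Q x = x)
    (n : ℕ) (x : ℕ → H) (hx : ∀ m, x m ∈ kerAdj T) :
    Q ((∑ j ∈ Finset.range (n + 1), (w ^ j : ℂ) • ((ContinuousLinearMap.adjoint T') ^ j))
        (∑ m ∈ Finset.range (n + 1), (T ^ m) (x m))) =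
      ∑ m ∈ Finset.range (n + 1), w ^ m • x m := by
  rw [ContinuousLinearMap.sum_apply, map_sum]
  have hterm : ∀ j ∈ Finset.range (n + 1),
      Q (((w ^ j : ℂ) • ((ContinuousLinearMap.adjoint T') ^ j))
          (∑ m ∈ Finset.range (n + 1), (T ^ m) (x m))) = w ^ j • x j := by
    intro j hj
    rw [ContinuousLinearMap.smul_apply, map_smul, map_sum, map_sum]
    rw [Finset.sum_eq_single_of_mem j hj]
    · rw [pow_adj_T hT'T j j _ le_rfl, Nat.sub_self, pow_zero, ContinuousLinearMap.one_apply,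
        hQK _ (hx j)]
    · intro m _ hmj
      rcases lt_or_gt_of_ne hmj with hlt | hgt
      · have hsplit : ((ContinuousLinearMap.adjoint T') ^ j) ((T ^ m) (x m)) = 0 := by
          have hjm : j = (j - m) + m := by omega
          rw [hjm, pow_add, ContinuousLinearMap.mul_apply,
            pow_adj_T hT'T m m _ le_rfl, Nat.sub_self, pow_zero, ContinuousLinearMap.one_apply,
            pow_adj_K hT'K (j - m) (by omega) _ (hx m)]
        rw [hsplit, map_zero]
      · rw [pow_adj_T hT'T j m _ (by omega), Q_pow_T hQT (m - j) (by omega)]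
  exact Finset.sum_congr rfl hterm

lemma repL (n : ℕ) :
    ∀ y ∈ (Finset.range (n + 1)).sup (fun k => (kerAdj T).map (T ^ k).toLinearMap),
      ∃ x : ℕ → H, (∀ m, x m ∈ kerAdj T) ∧
        y = ∑ m ∈ Finset.range (n + 1), (T ^ m) (x m) := by
  induction n with
  | zero =>
    intro y hy
    simp only [Nat.reduceAdd, Finset.range_one, Finset.sup_singleton] at hy
    obtain ⟨x0, hx0, rfl⟩ := Submodule.mem_map.mp hy
    exact ⟨fun _ => x0, fun _ => hx0, by simp⟩
  | succ n ih =>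
    intro y hy
    rw [Finset.range_add_one, Finset.sup_insert] at hy
    obtain ⟨a, ha, b, hb, rfl⟩ := Submodule.mem_sup.mp hy
    obtain ⟨u, hu, rfl⟩ := Submodule.mem_map.mp ha
    obtain ⟨x, hx, rfl⟩ := ih b hb
    refine ⟨Function.update x (n + 1) u, ?_, ?_⟩
    · intro m
      by_cases h : m = n + 1
      · subst h; simpa using hu
      · rw [Function.update_of_ne h]; exact hx m
    · have hsum : ∑ m ∈ Finset.range (n + 1 + 1), (T ^ m) (Function.update x (n + 1) u m)
          = (∑ m ∈ Finset.range (n + 1), (T ^ m) (x m)) + (T ^ (n + 1)) u := by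
        rw [Finset.sum_range_succ, Function.update_self]
        congr 1
        refine Finset.sum_congr rfl fun m hm => ?_
        rw [Function.update_of_ne (by simp at hm; omega)]
      rw [hsum]
      exact add_comm _ _

end Stmt11Aux

set_option maxHeartbeats 2000000 in
/-- for left-invertible `T` with the wandering subspace property,
`w ∈ bpe(T)` iff `supₙ ‖P_{Mₙ} Sₙ(w)|_{ker T*}‖ < ∞`, and in that case
`‖E_w*‖ = supₙ ‖P_{Mₙ} Sₙ(w)|_{ker T*}‖`. -/
theorem stmt_11 [TopologicalSpace.SeparableSpace H] (T T' A : H →L[ℂ] H) (hT : WSP T)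
    (hA1 : A ∘L (ContinuousLinearMap.adjoint T ∘L T) = 1)
    (hA2 : (ContinuousLinearMap.adjoint T ∘L T) ∘L A = 1)
    (hT' : T' = T ∘L A) (w : ℂ)
    (M : ℕ → Submodule ℂ H)
    (hM : ∀ n, M n =
      (⨆ k ∈ Finset.range (n + 1), (kerAdj T).map (T ^ k).toLinearMap).topologicalClosure)
    (P : ℕ → (H →L[ℂ] H)) (hP : ∀ n (x : H), P n x ∈ M n ∧ x - P n x ∈ (M n)ᗮ)
    (S : ℕ → (H →L[ℂ] H))
    (hS : ∀ n, S n = ∑ k ∈ Finset.range (n + 1), (starRingEnd ℂ w) ^ k • (T' ^ k)) :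
    (IsBPE T w ↔ ∃ C : ℝ, ∀ n, ‖(P n ∘L S n) ∘L (kerAdj T).subtypeL‖ ≤ C) ∧
    (IsBPE T w → ∀ E : H →L[ℂ] H, IsEval T w E →
      ‖ContinuousLinearMap.adjoint E‖ = ⨆ n, ‖(P n ∘L S n) ∘L (kerAdj T).subtypeL‖) := by
  -- pointwise versions of the left-inverse hypotheses
  have hA1' : ∀ z, A ((ContinuousLinearMap.adjoint T) (T z)) = z := fun z => by
    have h := congrArg (fun B : H →L[ℂ] H => B z) hA1
    simpa using h
  have hA2' : ∀ z, (ContinuousLinearMap.adjoint T) (T (A z)) = z := fun z => by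
    have h := congrArg (fun B : H →L[ℂ] H => B z) hA2
    simpa using h
  -- A is self-adjoint
  have hAadj : ContinuousLinearMap.adjoint A = A := by
    have h2 : ContinuousLinearMap.adjoint A ∘L
        (ContinuousLinearMap.adjoint T ∘L T) = 1 := by
      have h := congrArg (fun B => ContinuousLinearMap.adjoint B) hA2
      simpa [adjoint_comp, adjoint_adjoint, ContinuousLinearMap.one_def, adjoint_id] using h
    have h2' : ∀ u, ContinuousLinearMap.adjoint A
        ((ContinuousLinearMap.adjoint T) (T u)) = u := fun u => by
      have h := congrArg (fun B : H →L[ℂ] H => B u) h2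
      simpa using h
    ext z
    calc ContinuousLinearMap.adjoint A z
        = ContinuousLinearMap.adjoint A ((ContinuousLinearMap.adjoint T) (T (A z))) := by
          rw [hA2' z]
      _ = A z := h2' (A z)
  have hadjT' : ContinuousLinearMap.adjoint T' = A ∘L ContinuousLinearMap.adjoint T := by
    rw [hT', adjoint_comp, hAadj]
  have hT'T : ∀ z, ContinuousLinearMap.adjoint T' (T z) = z := fun z => by
    rw [hadjT']; exact hA1' z
  have hT'K : ∀ x ∈ kerAdj T, ContinuousLinearMap.adjoint T' x = 0 := fun x hx => by
    have hx0 : ContinuousLinearMap.adjoint T x = 0 := hx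
    rw [hadjT', ContinuousLinearMap.comp_apply, hx0, map_zero]
  -- the projection onto ker T* realized as 1 - T A T*
  set Qop : H →L[ℂ] H := 1 - (T ∘L A) ∘L ContinuousLinearMap.adjoint T with hQdef
  have hQapp : ∀ z, Qop z = z - T (A ((ContinuousLinearMap.adjoint T) z)) := fun z => by
    simp [hQdef, ContinuousLinearMap.sub_apply]
  have hQT : ∀ z, Qop (T z) = 0 := fun z => by
    rw [hQapp, hA1' z, sub_self]
  have hQK : ∀ x ∈ kerAdj T, Qop x = x := fun x hx => by
    have hx0 : ContinuousLinearMap.adjoint T x = 0 := hx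
    rw [hQapp, hx0, map_zero, map_zero, sub_zero]
  have hQmemK : ∀ z, Qop z ∈ kerAdj T := fun z => by
    show ContinuousLinearMap.adjoint T (Qop z) = 0
    rw [hQapp, map_sub, hA2' ((ContinuousLinearMap.adjoint T) z), sub_self]
  have hQorth : ∀ z, z - Qop z ∈ (kerAdj T)ᗮ := fun z => by
    have hz : z - Qop z = T (A ((ContinuousLinearMap.adjoint T) z)) := by
      rw [hQapp]; abel
    rw [hz, Submodule.mem_orthogonal]
    intro u hu
    have hu0 : ContinuousLinearMap.adjoint T u = 0 := hu
    rw [← ContinuousLinearMap.adjoint_inner_left T, hu0, inner_zero_left]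
  have hQproj : ∀ u, ((orthogonalProjection (kerAdj T) u : kerAdj T) : H) = Qop u := fun u =>
    eq_starProjection_of_mem_orthogonal (hQmemK u) (hQorth u)
  -- properties of the projections P n
  have hPfix : ∀ n y, y ∈ M n → P n y = y := by
    intro n y hy
    have hmem : y - P n y ∈ M n := Submodule.sub_mem _ hy (hP n y).1
    have h0 : ⟪y - P n y, y - P n y⟫_ℂ = 0 :=
      (Submodule.mem_orthogonal _ _).mp (hP n y).2 _ hmem
    have h1 : y - P n y = 0 := inner_self_eq_zero.mp h0
    have := sub_eq_zero.mp h1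
    exact this.symm
  have hPnorm : ∀ n z, ‖P n z‖ ≤ ‖z‖ := by
    intro n z
    have horth : ⟪(P n z : H), z - P n z⟫_ℂ = 0 :=
      (Submodule.mem_orthogonal _ _).mp (hP n z).2 _ (hP n z).1
    have h2 : ⟪(P n z : H), P n z⟫_ℂ = ⟪(P n z : H), z⟫_ℂ := by
      rw [inner_sub_right, sub_eq_zero] at horth
      exact horth.symm
    have h3 : ‖P n z‖ * ‖P n z‖ ≤ ‖P n z‖ * ‖z‖ := by
      have hre : ‖P n z‖ * ‖P n z‖ = RCLike.re (⟪(P n z : H), P n z⟫_ℂ) :=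
        (inner_self_eq_norm_mul_norm (𝕜 := ℂ) _).symm
      rw [hre, h2]
      calc RCLike.re (⟪(P n z : H), z⟫_ℂ) ≤ ‖(⟪(P n z : H), z⟫_ℂ)‖ := RCLike.re_le_norm _
        _ ≤ ‖P n z‖ * ‖z‖ := norm_inner_le_norm _ _
    by_cases h : ‖P n z‖ = 0
    · rw [h]; exact norm_nonneg z
    · exact le_of_mul_le_mul_left h3 (lt_of_le_of_ne (norm_nonneg _) (Ne.symm h))
  have hPadj : ∀ n, ContinuousLinearMap.adjoint (P n) = P n := by
    intro n
    refine ((ContinuousLinearMap.eq_adjoint_iff (P n) (P n)).mpr fun x y => ?_).symm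
    have e1 : ⟪(P n x : H), y - P n y⟫_ℂ = 0 :=
      (Submodule.mem_orthogonal _ _).mp (hP n y).2 _ (hP n x).1
    have e2 : ⟪(x - P n x : H), P n y⟫_ℂ = 0 :=
      (Submodule.mem_orthogonal' _ _).mp (hP n x).2 _ (hP n y).1
    have hy' : (P n y : H) + (y - P n y) = y := by abel
    have hx' : (P n x : H) + (x - P n x) = x := by abel
    calc ⟪(P n x : H), y⟫_ℂ = ⟪(P n x : H), P n y + (y - P n y)⟫_ℂ := by rw [hy']
      _ = ⟪(P n x : H), P n y⟫_ℂ + ⟪(P n x : H), y - P n y⟫_ℂ := inner_add_right _ _ _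
      _ = ⟪(P n x : H), P n y⟫_ℂ := by rw [e1, add_zero]
      _ = ⟪(P n x : H), P n y⟫_ℂ + ⟪(x - P n x : H), P n y⟫_ℂ := by rw [e2, add_zero]
      _ = ⟪((P n x : H) + (x - P n x)), P n y⟫_ℂ := (inner_add_left _ _ _).symm
      _ = ⟪x, P n y⟫_ℂ := by rw [hx']
  -- adjoint of S n
  have hSadj : ∀ n, ContinuousLinearMap.adjoint (S n) =
      ∑ j ∈ Finset.range (n + 1), (w ^ j : ℂ) • ((ContinuousLinearMap.adjoint T') ^ j) := by
    intro n
    rw [hS n, ← star_eq_adjoint, star_sum]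
    refine Finset.sum_congr rfl fun j _ => ?_
    rw [star_smul, star_pow, star_pow, starRingEnd_apply, star_star, star_eq_adjoint]
  have hGval : ∀ (n : ℕ) (x : ℕ → H), (∀ m, x m ∈ kerAdj T) →
      Qop ((ContinuousLinearMap.adjoint (S n)) (∑ m ∈ Finset.range (n + 1), (T ^ m) (x m))) =
        ∑ m ∈ Finset.range (n + 1), w ^ m • x m := by
    intro n x hx
    rw [hSadj n]
    exact Stmt11Aux.Gval hT'T hT'K hQT hQK n x hx
  -- pointwise description of the adjoint of the key operator
  have hPW : ∀ (n : ℕ) (z : H),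
      ‖(ContinuousLinearMap.adjoint ((P n ∘L S n) ∘L (kerAdj T).subtypeL)) z‖
        = ‖Qop ((ContinuousLinearMap.adjoint (S n)) (P n z))‖ := by
    intro n z
    rw [adjoint_comp, adjoint_comp, hPadj n, Submodule.adjoint_subtypeL]
    rw [ContinuousLinearMap.comp_apply, ContinuousLinearMap.comp_apply]
    rw [← hQproj ((ContinuousLinearMap.adjoint (S n)) (P n z))]
    rfl
  have hNnorm : ∀ n, ‖(P n ∘L S n) ∘L (kerAdj T).subtypeL‖
      = ‖ContinuousLinearMap.adjoint ((P n ∘L S n) ∘L (kerAdj T).subtypeL)‖ := fun n =>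
    (LinearIsometryEquiv.norm_map ContinuousLinearMap.adjoint _).symm
  -- the finite spans sit inside M n
  have hspanle : ∀ n, (Finset.range (n + 1)).sup (fun k => (kerAdj T).map (T ^ k).toLinearMap) ≤ M n := by
    intro n
    rw [hM n, Finset.sup_eq_iSup]
    exact Submodule.le_topologicalClosure _
  have hmemMn : ∀ (n : ℕ) (x : ℕ → H), (∀ m, x m ∈ kerAdj T) →
      (∑ m ∈ Finset.range (n + 1), (T ^ m) (x m)) ∈ M n := by
    intro n x hx
    refine hspanle n (Submodule.sum_mem _ fun m hm => ?_)
    exact Finset.le_sup (f := fun k => (kerAdj T).map (T ^ k).toLinearMap) hm ⟨x m, hx m, rfl⟩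
  -- closure argument for M n
  have hMn_sub : ∀ (n : ℕ) (Cs : Set H), IsClosed Cs →
      (((((Finset.range (n + 1)).sup (fun k => (kerAdj T).map (T ^ k).toLinearMap)) :
        Submodule ℂ H) : Set H) ⊆ Cs) →
      ((M n : Set H) ⊆ Cs) := by
    intro n Cs hcl hsub
    have hMeq : (M n : Set H) =
        closure (((Finset.range (n + 1)).sup (fun k => (kerAdj T).map (T ^ k).toLinearMap) :
          Submodule ℂ H) : Set H) := by
      rw [hM n, Submodule.topologicalClosure_coe, Finset.sup_eq_iSup]
    rw [hMeq]
    exact closure_minimal hsub hcl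
  -- the core inequality
  have hCore : ∀ (k : ℕ) (x : ℕ → H), (∀ m, x m ∈ kerAdj T) →
      ‖∑ m ∈ Finset.range (k + 1), w ^ m • x m‖ ≤
        ‖(P k ∘L S k) ∘L (kerAdj T).subtypeL‖ *
          ‖∑ m ∈ Finset.range (k + 1), (T ^ m) (x m)‖ := by
    intro k x hx
    have hyM : (∑ m ∈ Finset.range (k + 1), (T ^ m) (x m)) ∈ M k := hmemMn k x hx
    have h1 : Qop ((ContinuousLinearMap.adjoint (S k))
        (P k (∑ m ∈ Finset.range (k + 1), (T ^ m) (x m)))) =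
        ∑ m ∈ Finset.range (k + 1), w ^ m • x m := by
      rw [hPfix k _ hyM]; exact hGval k x hx
    calc ‖∑ m ∈ Finset.range (k + 1), w ^ m • x m‖
        = ‖Qop ((ContinuousLinearMap.adjoint (S k))
            (P k (∑ m ∈ Finset.range (k + 1), (T ^ m) (x m))))‖ := by rw [h1]
      _ = ‖(ContinuousLinearMap.adjoint ((P k ∘L S k) ∘L (kerAdj T).subtypeL))
            (∑ m ∈ Finset.range (k + 1), (T ^ m) (x m))‖ := (hPW k _).symm
      _ ≤ ‖ContinuousLinearMap.adjoint ((P k ∘L S k) ∘L (kerAdj T).subtypeL)‖ *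
            ‖∑ m ∈ Finset.range (k + 1), (T ^ m) (x m)‖ := le_opNorm _ _
      _ = ‖(P k ∘L S k) ∘L (kerAdj T).subtypeL‖ *
            ‖∑ m ∈ Finset.range (k + 1), (T ^ m) (x m)‖ := by rw [← hNnorm k]
  -- forward bound
  have hFwd : ∀ c : ℝ, 0 ≤ c →
      (∀ (k : ℕ) (x : ℕ → H), (∀ m, x m ∈ kerAdj T) →
        ‖∑ m ∈ Finset.range (k + 1), w ^ m • x m‖ ≤
          c * ‖∑ m ∈ Finset.range (k + 1), (T ^ m) (x m)‖) →
      ∀ n, ‖(P n ∘L S n) ∘L (kerAdj T).subtypeL‖ ≤ c := by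
    intro c hc hineq n
    rw [hNnorm n]
    refine opNorm_le_bound _ hc fun z => ?_
    rw [hPW n z]
    have key : ∀ y ∈ M n, ‖(Qop ∘L ContinuousLinearMap.adjoint (S n)) y‖ ≤ c * ‖y‖ := by
      intro y hy
      refine hMn_sub n {v | ‖(Qop ∘L ContinuousLinearMap.adjoint (S n)) v‖ ≤ c * ‖v‖}
        ?_ ?_ hy
      · exact isClosed_le ((Qop.comp (ContinuousLinearMap.adjoint (S n))).continuous.norm)
          (continuous_const.mul continuous_norm)
      · intro v hv
        obtain ⟨x, hx, rfl⟩ := Stmt11Aux.repL n v hv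
        show ‖(Qop ∘L ContinuousLinearMap.adjoint (S n))
            (∑ m ∈ Finset.range (n + 1), (T ^ m) (x m))‖ ≤ _
        rw [ContinuousLinearMap.comp_apply, hGval n x hx]
        exact hineq n x hx
    calc ‖Qop ((ContinuousLinearMap.adjoint (S n)) (P n z))‖
        = ‖(Qop ∘L ContinuousLinearMap.adjoint (S n)) (P n z)‖ := rfl
      _ ≤ c * ‖P n z‖ := key _ (hP n z).1
      _ ≤ c * ‖z‖ := mul_le_mul_of_nonneg_left (hPnorm n z) hc
  -- part 1
  have part1 : IsBPE T w ↔ ∃ C : ℝ, ∀ n, ‖(P n ∘L S n) ∘L (kerAdj T).subtypeL‖ ≤ C := by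
    constructor
    · rintro ⟨c, hc, hineq⟩
      exact ⟨c, hFwd c hc.le hineq⟩
    · rintro ⟨C, hC⟩
      have hC0 : (0 : ℝ) ≤ C :=
        le_trans (norm_nonneg (((P 0) ∘L S 0) ∘L (kerAdj T).subtypeL)) (hC 0)
      refine ⟨C + 1, by linarith, fun k x hx => ?_⟩
      calc ‖∑ m ∈ Finset.range (k + 1), w ^ m • x m‖
          ≤ ‖(P k ∘L S k) ∘L (kerAdj T).subtypeL‖ *
              ‖∑ m ∈ Finset.range (k + 1), (T ^ m) (x m)‖ := hCore k x hx
        _ ≤ (C + 1) * ‖∑ m ∈ Finset.range (k + 1), (T ^ m) (x m)‖ :=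
            mul_le_mul_of_nonneg_right (by linarith [hC k]) (norm_nonneg _)
  refine ⟨part1, ?_⟩
  -- part 2
  intro hbpe E hE
  obtain ⟨c, hc, hineq⟩ := hbpe
  have hbdd : BddAbove (Set.range fun n => ‖(P n ∘L S n) ∘L (kerAdj T).subtypeL‖) := by
    refine ⟨c, ?_⟩
    rintro - ⟨n, rfl⟩
    exact hFwd c hc.le hineq n
  have hle : ∀ n, ‖(P n ∘L S n) ∘L (kerAdj T).subtypeL‖ ≤
      ⨆ n, ‖(P n ∘L S n) ∘L (kerAdj T).subtypeL‖ := fun n => le_ciSup hbdd n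
  have h0s : (0 : ℝ) ≤ ⨆ n, ‖(P n ∘L S n) ∘L (kerAdj T).subtypeL‖ :=
    le_trans (norm_nonneg (((P 0) ∘L S 0) ∘L (kerAdj T).subtypeL)) (hle 0)
  rw [show ‖ContinuousLinearMap.adjoint E‖ = ‖E‖ from
    LinearIsometryEquiv.norm_map ContinuousLinearMap.adjoint E]
  apply le_antisymm
  · -- ‖E‖ ≤ sup
    refine opNorm_le_bound _ h0s fun y => ?_
    have hyU : y ∈ closure ((⨆ n : ℕ, (kerAdj T).map (T ^ n).toLinearMap : Submodule ℂ H) : Set H) := by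
      have hT2 : (⨆ n : ℕ, (kerAdj T).map (T ^ n).toLinearMap).topologicalClosure = ⊤ := hT
      have hy : y ∈ ((⨆ n : ℕ, (kerAdj T).map (T ^ n).toLinearMap).topologicalClosure : Set H) := by
        rw [hT2]; trivial
      rwa [Submodule.topologicalClosure_coe] at hy
    have hclosed : IsClosed {v : H | ‖E v‖ ≤
        (⨆ n, ‖(P n ∘L S n) ∘L (kerAdj T).subtypeL‖) * ‖v‖} :=
      isClosed_le (E.continuous.norm) (continuous_const.mul continuous_norm)
    have hsub : ((⨆ n : ℕ, (kerAdj T).map (T ^ n).toLinearMap : Submodule ℂ H) : Set H) ⊆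
        {v : H | ‖E v‖ ≤ (⨆ n, ‖(P n ∘L S n) ∘L (kerAdj T).subtypeL‖) * ‖v‖} := by
      intro v hv
      obtain ⟨F, hF⟩ := Submodule.mem_iSup_iff_exists_finset.mp hv
      have hFle : (⨆ i ∈ F, (kerAdj T).map (T ^ i).toLinearMap) ≤
          (Finset.range (F.sup id + 1)).sup (fun k => (kerAdj T).map (T ^ k).toLinearMap) := by
        rw [Finset.sup_eq_iSup]
        refine iSup₂_le fun i hi => ?_
        have hmem : i ∈ Finset.range (F.sup id + 1) := by
          refine Finset.mem_range.mpr ?_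
          have h := Finset.le_sup (f := (id : ℕ → ℕ)) hi
          simp only [_root_.id] at h
          omega
        exact le_iSup₂ (f := fun k (_ : k ∈ Finset.range (F.sup id + 1)) =>
          (kerAdj T).map (T ^ k).toLinearMap) i hmem
      obtain ⟨x, hx, rfl⟩ := Stmt11Aux.repL (F.sup id) v (hFle hF)
      have hEv : E (∑ m ∈ Finset.range (F.sup id + 1), (T ^ m) (x m)) =
          ∑ m ∈ Finset.range (F.sup id + 1), w ^ m • x m := hE.2 (F.sup id) x hx
      rw [Set.mem_setOf_eq, hEv]
      calc ‖∑ m ∈ Finset.range (F.sup id + 1), w ^ m • x m‖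
          ≤ ‖(P (F.sup id) ∘L S (F.sup id)) ∘L (kerAdj T).subtypeL‖ *
              ‖∑ m ∈ Finset.range (F.sup id + 1), (T ^ m) (x m)‖ := hCore (F.sup id) x hx
        _ ≤ (⨆ n, ‖(P n ∘L S n) ∘L (kerAdj T).subtypeL‖) *
              ‖∑ m ∈ Finset.range (F.sup id + 1), (T ^ m) (x m)‖ :=
            mul_le_mul_of_nonneg_right (hle (F.sup id)) (norm_nonneg _)
    exact closure_minimal hsub hclosed hyU
  · -- sup ≤ ‖E‖
    refine ciSup_le fun n => ?_
    rw [hNnorm n]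
    refine opNorm_le_bound _ (norm_nonneg E) fun z => ?_
    rw [hPW n z]
    have hagree : ∀ y ∈ M n, (Qop ∘L ContinuousLinearMap.adjoint (S n)) y = E y := by
      intro y hy
      refine hMn_sub n {v | (Qop ∘L ContinuousLinearMap.adjoint (S n)) v = E v}
        (isClosed_eq (Qop.comp (ContinuousLinearMap.adjoint (S n))).continuous E.continuous)
        ?_ hy
      intro v hv
      obtain ⟨x, hx, rfl⟩ := Stmt11Aux.repL n v hv
      show (Qop ∘L ContinuousLinearMap.adjoint (S n)) _ = E _
      rw [ContinuousLinearMap.comp_apply, hGval n x hx, hE.2 n x hx]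
    have := hagree (P n z) (hP n z).1
    rw [ContinuousLinearMap.comp_apply] at this
    rw [this]
    calc ‖E (P n z)‖ ≤ ‖E‖ * ‖P n z‖ := le_opNorm _ _
      _ ≤ ‖E‖ * ‖z‖ := mul_le_mul_of_nonneg_left (hPnorm n z) (norm_nonneg _)
end
end

section
/- Let T be left-invertible with the wandering subspace property and Cauchy dual T'. Set r := inf over nonzero x ∈ ker T* of 1/r_{T'}(x), where r_{T'}(x) = limsup_n ‖T'^n x‖^{1/n} is the local spectral radius. Then the open disc D(0, r) is contained in bpe(T); in particular D(0, r(T')^{-1}) ⊆ bpe(T), where r(T') is the spectral radius of T'. -/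
open ContinuousLinearMap Submodule Filter

noncomputable section

variable {H : Type*} [NormedAddCommGroup H] [InnerProductSpace ℂ H] [CompleteSpace H]

set_option linter.unusedSectionVars false

local notation "⟪" x ", " y "⟫" => @inner ℂ _ _ x y

section Aux

variable (T T' A : H →L[ℂ] H)

lemma aux_adjT_T' (hA2 : (ContinuousLinearMap.adjoint T ∘L T) ∘L A = 1)
    (hT' : T' = T ∘L A) (z : H) : ContinuousLinearMap.adjoint T (T' z) = z := by
  have := congrArg (fun f : H →L[ℂ] H => f z) hA2
  simpa [hT', ContinuousLinearMap.comp_apply] using this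

lemma aux_peel (hA2 : (ContinuousLinearMap.adjoint T ∘L T) ∘L A = 1)
    (hT' : T' = T ∘L A) (k : ℕ) (u v : H) :
    ⟪(T' ^ k) u, (T ^ k) v⟫ = ⟪u, v⟫ := by
  induction k generalizing u v with
  | zero => simp
  | succ k ih =>
    rw [pow_succ', pow_succ', ContinuousLinearMap.mul_apply,
      ContinuousLinearMap.mul_apply]
    have h1 : ⟪T' ((T' ^ k) u), T ((T ^ k) v)⟫
        = ⟪ContinuousLinearMap.adjoint T (T' ((T' ^ k) u)), (T ^ k) v⟫ :=
      (ContinuousLinearMap.adjoint_inner_left T ((T ^ k) v) (T' ((T' ^ k) u))).symm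
    rw [h1, aux_adjT_T' T T' A hA2 hT', ih]

lemma aux_diag (hA2 : (ContinuousLinearMap.adjoint T ∘L T) ∘L A = 1)
    (hT' : T' = T ∘L A) {x y : H} (hx : x ∈ kerAdj T) (hy : y ∈ kerAdj T)
    (n m : ℕ) :
    ⟪(T' ^ n) x, (T ^ m) y⟫ = if n = m then ⟪x, y⟫ else 0 := by
  have hx' : ContinuousLinearMap.adjoint T x = 0 := hx
  have hy' : ContinuousLinearMap.adjoint T y = 0 := hy
  rcases lt_trichotomy n m with h | h | h
  · rw [if_neg h.ne]
    obtain ⟨c, hc⟩ : ∃ c, m = n + (c + 1) := ⟨m - n - 1, by omega⟩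
    subst hc
    rw [pow_add, ContinuousLinearMap.mul_apply, aux_peel T T' A hA2 hT']
    rw [pow_succ', ContinuousLinearMap.mul_apply]
    rw [← ContinuousLinearMap.adjoint_inner_left T ((T ^ c) y) x, hx', inner_zero_left]
  · subst h; rw [if_pos rfl, aux_peel T T' A hA2 hT']
  · rw [if_neg h.ne']
    obtain ⟨c, hc⟩ : ∃ c, n = m + (c + 1) := ⟨n - m - 1, by omega⟩
    subst hc
    rw [pow_add, ContinuousLinearMap.mul_apply, aux_peel T T' A hA2 hT']
    rw [pow_succ', ContinuousLinearMap.mul_apply]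
    have hstep : T' ((T' ^ c) x) = T (A ((T' ^ c) x)) := by
      rw [hT']; rfl
    rw [hstep, ← ContinuousLinearMap.adjoint_inner_right T (A ((T' ^ c) x)) y, hy',
      inner_zero_right]

end Aux

section Core

variable (T T' A : H →L[ℂ] H)

lemma key_sum (hA2 : (ContinuousLinearMap.adjoint T ∘L T) ∘L A = 1)
    (hT' : T' = T ∘L A) (w : ℂ) (k : ℕ) {x : H} (hx : x ∈ kerAdj T)
    (y : ℕ → H) (hy : ∀ n, y n ∈ kerAdj T) :
    ⟪∑ n ∈ Finset.range (k + 1), (starRingEnd ℂ w) ^ n • (T' ^ n) x,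
      ∑ m ∈ Finset.range (k + 1), (T ^ m) (y m)⟫
    = ⟪x, ∑ m ∈ Finset.range (k + 1), w ^ m • y m⟫ := by
  rw [sum_inner, inner_sum]
  have hL : ∀ n ∈ Finset.range (k + 1),
      ⟪(starRingEnd ℂ w) ^ n • (T' ^ n) x, ∑ m ∈ Finset.range (k + 1), (T ^ m) (y m)⟫
      = w ^ n * ⟪x, y n⟫ := by
    intro n hn
    rw [inner_sum]
    have : ∀ m ∈ Finset.range (k + 1),
        ⟪(starRingEnd ℂ w) ^ n • (T' ^ n) x, (T ^ m) (y m)⟫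
        = if m = n then w ^ n * ⟪x, y n⟫ else 0 := by
      intro m hm
      rw [inner_smul_left, aux_diag T T' A hA2 hT' hx (hy m) n m]
      by_cases h : m = n
      · subst h; simp
      · rw [if_neg h, if_neg (Ne.symm h), mul_zero]
    rw [Finset.sum_congr rfl this, Finset.sum_ite_eq' (Finset.range (k + 1)), if_pos hn]
  rw [Finset.sum_congr rfl hL]
  congr 1
  ext n
  rw [inner_smul_right]

lemma core (hA2 : (ContinuousLinearMap.adjoint T ∘L T) ∘L A = 1)
    (hT' : T' = T ∘L A) (w : ℂ)
    (hbound : ∃ C : ℝ, ∀ x ∈ kerAdj T, ∀ k : ℕ,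
      ‖∑ n ∈ Finset.range (k + 1), (starRingEnd ℂ w) ^ n • (T' ^ n) x‖ ≤ C * ‖x‖) :
    IsBPE T w := by
  obtain ⟨C, hC⟩ := hbound
  refine ⟨max C 1, lt_of_lt_of_le one_pos (le_max_right _ _), fun k y hy => ?_⟩
  set p : H := ∑ n ∈ Finset.range (k + 1), w ^ n • y n with hp
  set f : H := ∑ n ∈ Finset.range (k + 1), (T ^ n) (y n) with hf
  have hpmem : p ∈ kerAdj T :=
    Submodule.sum_mem _ fun n _ => Submodule.smul_mem _ _ (hy n)
  have hkey := key_sum T T' A hA2 hT' w k hpmem y hy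
  rcases eq_or_lt_of_le (norm_nonneg p) with h0 | h0
  · rw [← h0]
    positivity
  have h1 : ‖p‖ ^ 2 = ‖(⟪p, p⟫ : ℂ)‖ := by
    rw [inner_self_eq_norm_sq_to_K]
    simp
  have h2 : ‖p‖ ^ 2 ≤ (C * ‖p‖) * ‖f‖ := by
    rw [h1, ← hkey]
    calc ‖⟪∑ n ∈ Finset.range (k + 1), (starRingEnd ℂ w) ^ n • (T' ^ n) p, f⟫‖
        ≤ ‖∑ n ∈ Finset.range (k + 1), (starRingEnd ℂ w) ^ n • (T' ^ n) p‖ * ‖f‖ :=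
          norm_inner_le_norm _ _
      _ ≤ (C * ‖p‖) * ‖f‖ :=
          mul_le_mul_of_nonneg_right (hC p hpmem k) (norm_nonneg f)
  have h3 : ‖p‖ ≤ C * ‖f‖ := by
    have := h2
    rw [pow_two] at this
    nlinarith [norm_nonneg f]
  calc ‖p‖ ≤ C * ‖f‖ := h3
    _ ≤ max C 1 * ‖f‖ := mul_le_mul_of_nonneg_right (le_max_left _ _) (norm_nonneg f)

end Core

section Bounds

lemma summable_of_eventually_le_geometric {f : ℕ → ℝ} {q : ℝ} (hq0 : 0 ≤ q) (hq1 : q < 1)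
    (hf : ∀ n, 0 ≤ f n) (h : ∀ᶠ n in atTop, f n ≤ q ^ n) : Summable f := by
  obtain ⟨N, hN⟩ := eventually_atTop.mp h
  rw [← summable_nat_add_iff N]
  refine Summable.of_nonneg_of_le (fun n => hf _) (fun n => hN (n + N) (by omega)) ?_
  simpa [pow_add] using (summable_geometric_of_lt_one hq0 hq1).mul_right (q ^ N)

lemma aux_bdd (T' : H →L[ℂ] H) (x : H) (n : ℕ) :
    ‖(T' ^ n) x‖ ^ (1 / (n : ℝ)) ≤ max ‖T'‖ 1 * max ‖x‖ 1 := by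
  have hB1 : (1 : ℝ) ≤ max ‖T'‖ 1 * max ‖x‖ 1 := by
    have := le_max_right ‖T'‖ 1
    have := le_max_right ‖x‖ 1
    nlinarith
  rcases Nat.eq_zero_or_pos n with hn | hn
  · subst hn
    simpa using hB1
  have hBnn : (0 : ℝ) ≤ max ‖T'‖ 1 * max ‖x‖ 1 := le_trans zero_le_one hB1
  have h1 : ‖(T' ^ n) x‖ ≤ (max ‖T'‖ 1 * max ‖x‖ 1) ^ n := by
    calc ‖(T' ^ n) x‖ ≤ ‖T' ^ n‖ * ‖x‖ := (T' ^ n).le_opNorm x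
      _ ≤ ‖T'‖ ^ n * ‖x‖ := by
          refine mul_le_mul_of_nonneg_right ?_ (norm_nonneg x)
          exact norm_pow_le' T' hn
      _ ≤ (max ‖T'‖ 1) ^ n * (max ‖x‖ 1) ^ n := by
          refine mul_le_mul ?_ ?_ (norm_nonneg x) (by positivity)
          · exact pow_le_pow_left₀ (norm_nonneg T') (le_max_left _ _) n
          · calc ‖x‖ ≤ max ‖x‖ 1 := le_max_left _ _
              _ ≤ (max ‖x‖ 1) ^ n := le_self_pow₀ (le_max_right _ _) hn.ne'
      _ = (max ‖T'‖ 1 * max ‖x‖ 1) ^ n := (mul_pow _ _ n).symm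
  calc ‖(T' ^ n) x‖ ^ (1 / (n : ℝ))
      ≤ ((max ‖T'‖ 1 * max ‖x‖ 1) ^ n) ^ (1 / (n : ℝ)) := by
        exact Real.rpow_le_rpow (norm_nonneg _) h1 (by positivity)
    _ = max ‖T'‖ 1 * max ‖x‖ 1 := by
        rw [← Real.rpow_natCast (max ‖T'‖ 1 * max ‖x‖ 1) n, ← Real.rpow_mul hBnn,
          mul_one_div_cancel (by exact_mod_cast hn.ne' : (n : ℝ) ≠ 0), Real.rpow_one]

lemma aux_isBounded (T' : H →L[ℂ] H) (x : H) :
    IsBoundedUnder (· ≤ ·) atTop (fun n : ℕ => ‖(T' ^ n) x‖ ^ (1 / (n : ℝ))) :=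
  Filter.isBoundedUnder_of ⟨max ‖T'‖ 1 * max ‖x‖ 1, aux_bdd T' x⟩

lemma bound_of_summable (T T' : H →L[ℂ] H) (w : ℂ)
    (hsum : ∀ x ∈ kerAdj T, Summable (fun n : ℕ => ‖w‖ ^ n * ‖(T' ^ n) x‖)) :
    ∃ C : ℝ, ∀ x ∈ kerAdj T, ∀ k : ℕ,
      ‖∑ n ∈ Finset.range (k + 1), (starRingEnd ℂ w) ^ n • (T' ^ n) x‖ ≤ C * ‖x‖ := by
  haveI : CompleteSpace (kerAdj T) :=
    (ContinuousLinearMap.isClosed_ker (ContinuousLinearMap.adjoint T)).completeSpace_coe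
  set g : ℕ → (kerAdj T) →L[ℂ] H := fun N =>
    (∑ n ∈ Finset.range (N + 1), ((starRingEnd ℂ w) ^ n) • (T' ^ n)).comp
      (kerAdj T).subtypeL with hgdef
  have hg : ∀ (N : ℕ) (x : kerAdj T),
      g N x = ∑ n ∈ Finset.range (N + 1), (starRingEnd ℂ w) ^ n • (T' ^ n) (x : H) := by
    intro N x
    simp [hgdef, ContinuousLinearMap.sum_apply, ContinuousLinearMap.smul_apply]
  have hnormsum : ∀ (N : ℕ) (z : H),
      ‖∑ n ∈ Finset.range (N + 1), (starRingEnd ℂ w) ^ n • (T' ^ n) z‖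
        ≤ ∑ n ∈ Finset.range (N + 1), ‖w‖ ^ n * ‖(T' ^ n) z‖ := by
    intro N z
    calc ‖∑ n ∈ Finset.range (N + 1), (starRingEnd ℂ w) ^ n • (T' ^ n) z‖
        ≤ ∑ n ∈ Finset.range (N + 1), ‖(starRingEnd ℂ w) ^ n • (T' ^ n) z‖ :=
          norm_sum_le _ _
      _ = ∑ n ∈ Finset.range (N + 1), ‖w‖ ^ n * ‖(T' ^ n) z‖ := by
          refine Finset.sum_congr rfl fun n _ => ?_
          rw [norm_smul, norm_pow, RCLike.norm_conj]
  have hpt : ∀ x : kerAdj T, ∃ C, ∀ N, ‖g N x‖ ≤ C := by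
    intro x
    refine ⟨∑' n : ℕ, ‖w‖ ^ n * ‖(T' ^ n) (x : H)‖, fun N => ?_⟩
    rw [hg]
    exact (hnormsum N x).trans
      (Summable.sum_le_tsum _ (fun i _ => by positivity) (hsum x x.2))
  obtain ⟨C, hC⟩ := banach_steinhaus hpt
  refine ⟨C, fun x hx k => ?_⟩
  have h2 := (g k).le_opNorm ⟨x, hx⟩
  rw [hg] at h2
  have h3 : ‖(⟨x, hx⟩ : kerAdj T)‖ = ‖x‖ := rfl
  rw [h3] at h2
  exact h2.trans (mul_le_mul_of_nonneg_right (hC k) (norm_nonneg x))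

end Bounds


/-- the open disc `D(0, r)` with `r = inf_{0 ≠ x ∈ ker T*} 1 / r_{T'}(x)` is
contained in `bpe(T)`; in particular `D(0, r(T')⁻¹) ⊆ bpe(T)`. -/
theorem stmt_12 [TopologicalSpace.SeparableSpace H] (T T' A : H →L[ℂ] H) (hT : WSP T)
    (hA1 : A ∘L (ContinuousLinearMap.adjoint T ∘L T) = 1)
    (hA2 : (ContinuousLinearMap.adjoint T ∘L T) ∘L A = 1)
    (hT' : T' = T ∘L A) (r : ℝ)
    (hr : r = sInf {s : ℝ | ∃ x ∈ kerAdj T, x ≠ 0 ∧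
      s = (Filter.atTop.limsup fun n : ℕ => ‖(T' ^ n) x‖ ^ (1 / (n : ℝ)))⁻¹}) :
    (∀ w : ℂ, ‖w‖ < r → IsBPE T w) ∧
    (∀ w : ℂ, (‖w‖₊ : ENNReal) < (spectralRadius ℂ T')⁻¹ → IsBPE T w) := by
  have hlimsup_nonneg : ∀ z : H,
      0 ≤ atTop.limsup fun n : ℕ => ‖(T' ^ n) z‖ ^ (1 / (n : ℝ)) := by
    intro z
    refine le_limsup_of_frequently_le (Frequently.of_forall fun n => ?_) (aux_isBounded T' z)
    positivity
  constructor
  · -- Part 1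
    intro w hw
    apply core T T' A hA2 hT' w
    apply bound_of_summable T T' w
    intro x hx
    by_cases hx0 : x = 0
    · subst hx0
      simpa using summable_zero
    set L := atTop.limsup fun n : ℕ => ‖(T' ^ n) x‖ ^ (1 / (n : ℝ)) with hL
    have hmem : L⁻¹ ∈ {s : ℝ | ∃ x ∈ kerAdj T, x ≠ 0 ∧
        s = (Filter.atTop.limsup fun n : ℕ => ‖(T' ^ n) x‖ ^ (1 / (n : ℝ)))⁻¹} :=
      ⟨x, hx, hx0, rfl⟩
    have hbdd : BddBelow {s : ℝ | ∃ x ∈ kerAdj T, x ≠ 0 ∧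
        s = (Filter.atTop.limsup fun n : ℕ => ‖(T' ^ n) x‖ ^ (1 / (n : ℝ)))⁻¹} := by
      refine ⟨0, fun s hs => ?_⟩
      obtain ⟨z, _, _, rfl⟩ := hs
      exact inv_nonneg.mpr (hlimsup_nonneg z)
    have hrle : r ≤ L⁻¹ := by rw [hr]; exact csInf_le hbdd hmem
    have hwL : ‖w‖ < L⁻¹ := hw.trans_le hrle
    have hL0 : 0 ≤ L := hlimsup_nonneg x
    have hLpos : 0 < L := by
      rcases hL0.lt_or_eq with h | h
      · exact h
      · exfalso
        rw [← h, inv_zero] at hwL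
        exact absurd hwL (not_lt.mpr (norm_nonneg w))
    have hwL1 : ‖w‖ * L < 1 := by
      have := mul_lt_mul_of_pos_right hwL hLpos
      rwa [inv_mul_cancel₀ hLpos.ne'] at this
    set ε : ℝ := (1 - ‖w‖ * L) / (2 * (‖w‖ + 1)) with hε
    have hεpos : 0 < ε := by
      apply div_pos (by linarith)
      positivity
    have hq1 : ‖w‖ * (L + ε) < 1 := by
      have h2 : (‖w‖ + 1) * ε = (1 - ‖w‖ * L) / 2 := by
        rw [hε]
        field_simp
      nlinarith [norm_nonneg w, hεpos]
    have hev : ∀ᶠ n : ℕ in atTop, ‖(T' ^ n) x‖ ^ (1 / (n : ℝ)) < L + ε :=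
      eventually_lt_of_limsup_lt (lt_add_of_pos_right L hεpos) (aux_isBounded T' x)
    refine summable_of_eventually_le_geometric (q := ‖w‖ * (L + ε))
      (by positivity) hq1 (fun n => by positivity) ?_
    filter_upwards [hev, eventually_ge_atTop 1] with n h1 h2
    have hn0 : (n : ℝ) ≠ 0 := by exact_mod_cast (by omega : n ≠ 0)
    have ha : (0 : ℝ) ≤ ‖(T' ^ n) x‖ := norm_nonneg _
    have hTn : ‖(T' ^ n) x‖ ≤ (L + ε) ^ n := by
      have h3 : (‖(T' ^ n) x‖ ^ (1 / (n : ℝ))) ^ n ≤ (L + ε) ^ n :=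
        pow_le_pow_left₀ (Real.rpow_nonneg ha _) h1.le n
      rwa [← Real.rpow_natCast (‖(T' ^ n) x‖ ^ (1 / (n : ℝ))) n, ← Real.rpow_mul ha,
        one_div, inv_mul_cancel₀ hn0, Real.rpow_one] at h3
    calc ‖w‖ ^ n * ‖(T' ^ n) x‖ ≤ ‖w‖ ^ n * (L + ε) ^ n :=
          mul_le_mul_of_nonneg_left hTn (by positivity)
      _ = (‖w‖ * (L + ε)) ^ n := (mul_pow _ _ n).symm
  · -- Part 2
    intro w hw2
    apply core T T' A hA2 hT' w
    apply bound_of_summable T T' w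
    intro x hx
    by_cases hw0 : w = 0
    · subst hw0
      refine summable_of_ne_finset_zero (s := {0}) fun n hn => ?_
      simp only [Finset.mem_singleton] at hn
      simp [zero_pow hn]
    have h0 : ‖w‖₊ ≠ 0 := by simpa using hw0
    have hρ : spectralRadius ℂ T' < ((‖w‖₊ : ENNReal))⁻¹ := ENNReal.lt_inv_iff_lt_inv.mp hw2
    obtain ⟨q, hq1, hq2⟩ := ENNReal.lt_iff_exists_nnreal_btwn.mp hρ
    have hev := (spectrum.pow_nnnorm_pow_one_div_tendsto_nhds_spectralRadius
      T').eventually_lt_const hq1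
    have hq3 : ‖w‖₊ * q < 1 := by
      have h1 : (q : ENNReal) < (↑(‖w‖₊⁻¹) : ENNReal) := by rwa [ENNReal.coe_inv h0]
      have h2 : q < ‖w‖₊⁻¹ := ENNReal.coe_lt_coe.mp h1
      have h3 : ‖w‖₊ * q < ‖w‖₊ * ‖w‖₊⁻¹ :=
        mul_lt_mul_of_pos_left h2 (pos_iff_ne_zero.mpr h0)
      rwa [mul_inv_cancel₀ h0] at h3
    have hwq : ‖w‖ * (q : ℝ) < 1 := by exact_mod_cast hq3
    have hqnn : (0 : ℝ) ≤ ‖w‖ * (q : ℝ) := by positivity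
    have hopsum : Summable fun n : ℕ => ‖w‖ ^ n * ‖T' ^ n‖ := by
      refine summable_of_eventually_le_geometric hqnn hwq (fun n => by positivity) ?_
      filter_upwards [hev, eventually_ge_atTop 1] with n h1 h2
      have hn0 : (n : ℝ) ≠ 0 := by exact_mod_cast (by omega : n ≠ 0)
      have hop : ‖T' ^ n‖ ≤ (q : ℝ) ^ n := by
        have h3 : ((‖T' ^ n‖₊ : ENNReal) ^ (1 / (n : ℝ))) ^ (n : ℝ) ≤ (q : ENNReal) ^ (n : ℝ) :=
          ENNReal.rpow_le_rpow h1.le (by positivity)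
        rw [← ENNReal.rpow_mul, one_div, inv_mul_cancel₀ hn0, ENNReal.rpow_one,
          ENNReal.rpow_natCast, ← ENNReal.coe_pow] at h3
        have h4 : ‖T' ^ n‖₊ ≤ q ^ n := ENNReal.coe_le_coe.mp h3
        exact_mod_cast h4
      calc ‖w‖ ^ n * ‖T' ^ n‖ ≤ ‖w‖ ^ n * (q : ℝ) ^ n :=
            mul_le_mul_of_nonneg_left hop (by positivity)
        _ = (‖w‖ * (q : ℝ)) ^ n := (mul_pow _ _ n).symm
    refine Summable.of_nonneg_of_le (fun n => by positivity)
      (fun n => ?_) (hopsum.mul_right ‖x‖)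
    calc ‖w‖ ^ n * ‖(T' ^ n) x‖ ≤ ‖w‖ ^ n * (‖T' ^ n‖ * ‖x‖) :=
          mul_le_mul_of_nonneg_left ((T' ^ n).le_opNorm x) (by positivity)
      _ = ‖w‖ ^ n * ‖T' ^ n‖ * ‖x‖ := by ring
end
end
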